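/- Let C and M be cocomplete categories, U : C → M a faithful colimit-preserving functor, with M complete, C co-wellpowered with a generating set G, and suppose C and M have the same initial object 0 with U(0) = 0. Then C is complete. Explicitly, the limit of a functor F : A → C from a small category is constructed as follows: let P = lim U∘F in M with projections q_a : P → UF(a); form the comma-type category H of pairs (E, p) with E ∈ C and p : U(E) → P in M such that each composite q_a ∘ p lifts to a morphism in C; then H has a final object (E₀, p₀), and E₀ together with the lifted morphisms π_a = q_a p₀ is the limit of F in C. -/

import Mathlib

open CategoryTheory Limits

/-- **Completeness via the SAFT construction** (Remark 2.2).
Let `C`, `M` be cocomplete categories, `U : C ⥤ M` a faithful colimit-preserving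
functor, `M` complete, `C` co-wellpowered with a generating set `G`, and suppose `C` and
`M` have initial objects identified by `U`.  Then `C` is complete, and the limit of any
functor `F : A ⥤ C` from a small category is constructed as follows: let
`P = lim U ∘ F` with projections `q_a`; form the comma-type category `H` of pairs
`(E, p : U(E) ⟶ P)` such that each `q_a ∘ p` lifts to a morphism of `C`; then `H` has a
final object `(E₀, p₀)`, and `E₀` with the lifted morphisms `π_a = q_a ∘ p₀` is the
limit of `F` in `C`. -/
theorem complete_of_SAFT_construction
    (C : Type u) [Category.{u} C] (M : Type u) [Category.{u} M]
    [HasColimits C] [HasColimits M] [HasLimits M]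
    [WellPowered.{u} Cᵒᵖ] (G : Set C) (hG : ObjectProperty.IsSeparating (C := C) G)
    (U : C ⥤ M) [U.Faithful] [PreservesColimits U]
    [HasInitial C] [HasInitial M] (h0 : Nonempty (IsInitial (U.obj (⊥_ C)))) :
    HasLimits C ∧
    ∀ (A : Type u) [Category.{u} A] (F : A ⥤ C),
      ∃ T : ObjectProperty.FullSubcategory (fun f : CostructuredArrow U (limit (F ⋙ U)) =>
          ∀ a : A, ∃ g : f.left ⟶ F.obj a,
            U.map g = f.hom ≫ limit.π (F ⋙ U) a),
        Nonempty (IsTerminal T) ∧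
        ∃ (c : Cone F) (_ : Nonempty (IsLimit c)) (e : c.pt ≅ T.obj.left),
          ∀ a : A, U.map (c.π.app a) =
            U.map e.hom ≫ T.obj.hom ≫ limit.π (F ⋙ U) a := by
  have hl : HasLimits C := hasLimits_of_hasColimits_of_isSeparating hG
  refine ⟨hl, fun A _ F => ?_⟩
  -- the candidate terminal object: the limit of `F` in `C` with the comparison map
  refine ⟨⟨CostructuredArrow.mk (limit.post F U), fun a =>
    ⟨limit.π F a, (limit.post_π F U a).symm⟩⟩, ?_, ?_⟩
  · -- terminality
    constructor
    have hcone : ∀ (X : ObjectProperty.FullSubcategory (fun f : CostructuredArrow U (limit (F ⋙ U)) =>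
          ∀ a : A, ∃ g : f.left ⟶ F.obj a,
            U.map g = f.hom ≫ limit.π (F ⋙ U) a)),
        ∀ {a b : A} (φ : a ⟶ b),
          (X.property a).choose ≫ F.map φ = (X.property b).choose := by
      intro X a b φ
      apply U.map_injective
      rw [U.map_comp, (X.property a).choose_spec, (X.property b).choose_spec,
        Category.assoc, ← Functor.comp_map, limit.w (F ⋙ U) φ]
    refine IsTerminal.ofUniqueHom (fun X => ObjectProperty.homMk (CostructuredArrow.homMk
        (limit.lift F ⟨X.obj.left,
          { app := fun a => (X.property a).choose
            naturality := fun a b φ => by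
              simpa using (hcone X φ).symm }⟩) ?_)) ?_
    · apply limit.hom_ext
      intro a
      simp only [Category.assoc, CostructuredArrow.mk_hom_eq_self, limit.post_π,
        ← U.map_comp, limit.lift_π]
      exact (X.property a).choose_spec
    · intro X m
      apply ObjectProperty.hom_ext
      apply CostructuredArrow.hom_ext
      simp only [ObjectProperty.homMk_hom, CostructuredArrow.homMk_left]
      apply limit.hom_ext
      intro a
      rw [limit.lift_π]
      apply U.map_injective
      rw [(X.property a).choose_spec, U.map_comp, ← limit.post_π F U a,
        ← Category.assoc]
      congr 1
      simpa using m.hom.w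
  · -- the limit cone
    refine ⟨limit.cone F, ⟨limit.isLimit F⟩, Iso.refl _, fun a => ?_⟩
    simp [limit.post_π]
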